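/- For all CO problems P and Q, P ≡^s_g Q if and only if P ≡^s Q. -/

import Mathlib

open scoped Classical

/-- Propositional formulas over a universe `U` of atoms, built from atoms,
`⊥`, conjunction, disjunction and implication. -/
inductive Formula (U : Type) : Type where
  | atom : U → Formula U
  | bot  : Formula U
  | conj : Formula U → Formula U → Formula U
  | disj : Formula U → Formula U → Formula U
  | imp  : Formula U → Formula U → Formula U

variable {U : Type}

/-- Classical satisfaction `I ⊨ φ`. -/
def Sat (I : Set U) : Formula U → Prop
  | .atom a => a ∈ I
  | .bot => False
  | .conj φ ψ => Sat I φ ∧ Sat I ψ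
  | .disj φ ψ => Sat I φ ∨ Sat I ψ
  | .imp φ ψ => Sat I φ → Sat I ψ

/-- Classical satisfaction of a theory. -/
def SatTheory (I : Set U) (T : Set (Formula U)) : Prop := ∀ φ ∈ T, Sat I φ

/-- `Mod T`: the classical models of a theory `T`. -/
def models (T : Set (Formula U)) : Set (Set U) := {I | SatTheory I T}

/-- HT-satisfaction `⟨I, J⟩ ⊨_HT φ` (for `I ⊆ J`). -/
def SatHT (I J : Set U) : Formula U → Prop
  | .atom a => a ∈ I
  | .bot => False
  | .conj φ ψ => SatHT I J φ ∧ SatHT I J ψ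
  | .disj φ ψ => SatHT I J φ ∨ SatHT I J ψ
  | .imp φ ψ => Sat J (Formula.imp φ ψ) ∧ (¬ SatHT I J φ ∨ SatHT I J ψ)

/-- HT-satisfaction of a theory. -/
def SatHTTheory (I J : Set U) (T : Set (Formula U)) : Prop := ∀ φ ∈ T, SatHT I J φ

/-- `HT T`: the set of HT-models `⟨I,J⟩` (with `I ⊆ J`) of a theory `T`. -/
def HTmod (T : Set (Formula U)) : Set (Set U × Set U) :=
  {p | p.1 ⊆ p.2 ∧ SatHTTheory p.1 p.2 T}

/-- `AS T`: the equilibrium models (answer sets) of a theory `T`. -/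
def AS (T : Set (Formula U)) : Set (Set U) :=
  {I | SatHTTheory I I T ∧ ∀ J : Set U, J ⊂ I → ¬ SatHTTheory J I T}

/-- A ranked preference rule `φ₁ > ⋯ > φₖ ←ʲ ψ` with nonempty head and rank `j ≥ 1`. -/
structure Rule (U : Type) : Type where
  head : List (Formula U)
  body : Formula U
  rank : ℕ
  head_ne : head ≠ []
  rank_pos : 1 ≤ rank

/-- Satisfaction degree `v_I(r)`: the least (1-based) index of a satisfied head formula
if `I` satisfies the body and some head formula; `1` otherwise. -/
noncomputable def degree (I : Set U) (r : Rule U) : ℕ :=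
  if Sat I r.body ∧ ∃ φ ∈ r.head, Sat I φ then
    sInf {n : ℕ | ∃ k : Fin r.head.length, n = k.1 + 1 ∧ Sat I (r.head.get k)}
  else 1

/-- The strict preference `I >^S J` induced by a selector `S`. -/
def gtSel (S : Set (Rule U)) (I J : Set U) : Prop :=
  ∃ r' ∈ S, degree I r' < degree J r' ∧
    (∀ r ∈ S, r.rank = r'.rank → degree I r ≤ degree J r) ∧
    (∀ r ∈ S, r.rank < r'.rank → degree I r = degree J r)

/-- The indifference `I ≈^S J` induced by a selector `S`. -/
def simSel (S : Set (Rule U)) (I J : Set U) : Prop :=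
  ∀ r ∈ S, degree I r = degree J r

/-- The preference `I ≥^S J` induced by a selector `S`. -/
def geSel (S : Set (Rule U)) (I J : Set U) : Prop :=
  simSel S I J ∨ gtSel S I J

/-- An optimization problem: a generator theory plus a finite selector. -/
structure OptProblem (U : Type) : Type where
  gen : Set (Formula U)
  sel : Set (Rule U)
  sel_finite : sel.Finite

/-- Union of optimization problems. -/
def OptProblem.union (P Q : OptProblem U) : OptProblem U :=
  ⟨P.gen ∪ Q.gen, P.sel ∪ Q.sel, P.sel_finite.union Q.sel_finite⟩

/-- `P_{<i}`: the restriction of `P` to preference rules of rank `< i`. -/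
def OptProblem.below (P : OptProblem U) (i : ℕ) : OptProblem U :=
  ⟨P.gen, {r ∈ P.sel | r.rank < i}, P.sel_finite.subset (Set.sep_subset _ _)⟩

/-- The two semantics for generators: classical (CO problems) and
equilibrium-model/answer-set (ASO problems). -/
inductive Sem : Type where
  | co : Sem
  | aso : Sem

/-- `μ(P)`: the outcomes of `P` under the chosen semantics. -/
def outcomes (sem : Sem) (P : OptProblem U) : Set (Set U) :=
  match sem with
  | Sem.co => models P.gen
  | Sem.aso => AS P.gen

/-- `π(P)`: the preferred (optimal) outcomes of `P`. -/
def pref (sem : Sem) (P : OptProblem U) : Set (Set U) :=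
  {I | I ∈ outcomes sem P ∧ ¬ ∃ J ∈ outcomes sem P, gtSel P.sel J I}

/-- `diff^P(I,J)`: the largest `k` with `I ≈^{P_{<k}} J` (`∞` if this holds for all `k`). -/
noncomputable def diff (P : OptProblem U) (I J : Set U) : ℕ∞ :=
  if ∀ k : ℕ, simSel (P.below k).sel I J then ⊤
  else ((sSup {k : ℕ | simSel (P.below k).sel I J} : ℕ) : ℕ∞)

/-- Restriction `≻_V` of a relation on interpretations to a set `V` of interpretations. -/
def restrictRel (rel : Set U → Set U → Prop) (V : Set (Set U)) : Set U → Set U → Prop :=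
  fun A B => rel A B ∧ A ∈ V ∧ B ∈ V

/-- All rules of `S` have rank in the interval `[i,j]` (`j` may be `∞`). -/
def inRankInterval (i : ℕ) (j : ℕ∞) (S : Set (Rule U)) : Prop :=
  ∀ r ∈ S, i ≤ r.rank ∧ (r.rank : ℕ∞) ≤ j

/-- Strong sel-equivalence `P ≡^{s,[i,j]} Q`: same preferred outcomes under addition of any
context from `L^{s,[i,j]}` (empty generator, selector with ranks in `[i,j]`). -/
def seqv (sem : Sem) (i : ℕ) (j : ℕ∞) (P Q : OptProblem U) : Prop :=
  ∀ R : OptProblem U, R.gen = ∅ → inRankInterval i j R.sel →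
    pref sem (P.union R) = pref sem (Q.union R)

/-- Strong gen-equivalence `P ≡_g Q`: same preferred outcomes under addition of any
generator context from `L^g` (empty selector). -/
def geqv (sem : Sem) (P Q : OptProblem U) : Prop :=
  ∀ R : OptProblem U, R.sel = ∅ →
    pref sem (P.union R) = pref sem (Q.union R)

/-- Strong (combined) equivalence `P ≡^{s,[i,j]}_g Q`: same preferred outcomes under addition
of any context from `L^{[i,j]}` (arbitrary generator, selector with ranks in `[i,j]`). -/
def sgeqv (sem : Sem) (i : ℕ) (j : ℕ∞) (P Q : OptProblem U) : Prop :=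
  ∀ R : OptProblem U, inRankInterval i j R.sel →
    pref sem (P.union R) = pref sem (Q.union R)


/-! ### Auxiliary material for the proof of Statement 13 -/

/-- The tautology `⊥ → ⊥`. -/
def tautF : Formula U := Formula.imp Formula.bot Formula.bot

lemma sat_tautF (K : Set U) : Sat K (tautF : Formula U) := fun h => h

/-- The "blocker" rule `ψ > ⊤ ←¹ ⊤`. -/
def brule (ψ : Formula U) : Rule U :=
  ⟨[ψ, tautF], tautF, 1, by simp, le_refl 1⟩

lemma degree_ge_one (K : Set U) (r : Rule U) : 1 ≤ degree K r := by
  unfold degree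
  split_ifs with h
  · obtain ⟨hb, φ, hφm, hφs⟩ := h
    obtain ⟨k, hk⟩ := List.mem_iff_get.mp hφm
    have hmem : (k.1 + 1) ∈
        {n : ℕ | ∃ k : Fin r.head.length, n = k.1 + 1 ∧ Sat K (r.head.get k)} :=
      ⟨k, rfl, by rw [hk]; exact hφs⟩
    have hin := Nat.sInf_mem ⟨k.1 + 1, hmem⟩
    obtain ⟨k', hk', -⟩ := hin
    omega
  · exact le_refl 1

lemma degree_brule (K : Set U) (ψ : Formula U) :
    degree K (brule ψ) = if Sat K ψ then 1 else 2 := by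
  have hcond : Sat K (brule ψ).body ∧ ∃ φ ∈ (brule ψ).head, Sat K φ :=
    ⟨sat_tautF K, tautF, by simp [brule], sat_tautF K⟩
  unfold degree
  rw [if_pos hcond]
  by_cases hψ : Sat K ψ
  · rw [if_pos hψ]
    have h1 : (1 : ℕ) ∈
        {n : ℕ | ∃ k : Fin (brule ψ).head.length, n = k.1 + 1 ∧ Sat K ((brule ψ).head.get k)} :=
      ⟨⟨0, by simp [brule]⟩, rfl, hψ⟩
    have hin := Nat.sInf_mem ⟨1, h1⟩
    obtain ⟨k, hk, -⟩ := hin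
    have hle := Nat.sInf_le h1
    omega
  · rw [if_neg hψ]
    have h2 : (2 : ℕ) ∈
        {n : ℕ | ∃ k : Fin (brule ψ).head.length, n = k.1 + 1 ∧ Sat K ((brule ψ).head.get k)} :=
      ⟨⟨1, by simp [brule]⟩, rfl, sat_tautF K⟩
    have hin := Nat.sInf_mem ⟨2, h2⟩
    obtain ⟨⟨k, hk⟩, hk', hsk⟩ := hin
    have hk2 : k < 2 := hk
    have hle := Nat.sInf_le h2
    rcases (by omega : k = 0 ∨ k = 1) with rfl | rfl
    · exact absurd hsk hψ
    · rw [hk']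

lemma degree_congr {K K' : Set U} {r : Rule U}
    (hb : Sat K r.body ↔ Sat K' r.body)
    (hh : ∀ φ ∈ r.head, (Sat K φ ↔ Sat K' φ)) :
    degree K r = degree K' r := by
  have h1 : (Sat K r.body ∧ ∃ φ ∈ r.head, Sat K φ) ↔
      (Sat K' r.body ∧ ∃ φ ∈ r.head, Sat K' φ) := by
    constructor
    · rintro ⟨h, φ, hm, hs⟩; exact ⟨hb.mp h, φ, hm, (hh φ hm).mp hs⟩
    · rintro ⟨h, φ, hm, hs⟩; exact ⟨hb.mpr h, φ, hm, (hh φ hm).mpr hs⟩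
  have h2 : {n : ℕ | ∃ k : Fin r.head.length, n = k.1 + 1 ∧ Sat K (r.head.get k)} =
      {n : ℕ | ∃ k : Fin r.head.length, n = k.1 + 1 ∧ Sat K' (r.head.get k)} := by
    ext n
    constructor
    · rintro ⟨k, rfl, hs⟩
      exact ⟨k, rfl, (hh _ (List.get_mem r.head k)).mp hs⟩
    · rintro ⟨k, rfl, hs⟩
      exact ⟨k, rfl, (hh _ (List.get_mem r.head k)).mpr hs⟩
  by_cases hc : Sat K r.body ∧ ∃ φ ∈ r.head, Sat K φ
  · rw [degree, degree, if_pos hc, if_pos (h1.mp hc), h2]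
  · rw [degree, degree, if_neg hc, if_neg (fun h => hc (h1.mpr h))]

lemma gtSel_mono_eq {G B : Set (Rule U)} {K I : Set U}
    (hB : ∀ b ∈ B, degree K b = degree I b) (h : gtSel G K I) : gtSel (G ∪ B) K I := by
  obtain ⟨r', hr', hlt, hle, heq⟩ := h
  refine ⟨r', Or.inl hr', hlt, ?_, ?_⟩
  · rintro r (hr | hr) hrk
    · exact hle r hr hrk
    · exact (hB r hr).le
  · rintro r (hr | hr) hrk
    · exact heq r hr hrk
    · exact hB r hr

lemma gtSel_brules {G : Set (Rule U)} {F : Set (Formula U)} {K I : Set U}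
    (hI : ∀ ψ ∈ F, Sat I ψ) (h : gtSel (G ∪ brule '' F) K I) :
    gtSel G K I ∧ ∀ ψ ∈ F, Sat K ψ := by
  obtain ⟨r', hr', hlt, hle, heq⟩ := h
  have hr'G : r' ∈ G := by
    rcases hr' with hg | ⟨ψ, hψ, rfl⟩
    · exact hg
    · exfalso
      rw [degree_brule, degree_brule, if_pos (hI ψ hψ)] at hlt
      split_ifs at hlt <;> omega
  have hdegK : ∀ ψ ∈ F, degree K (brule ψ) = 1 := by
    intro ψ hψ
    have hmem : brule ψ ∈ G ∪ brule '' F := Or.inr ⟨ψ, hψ, rfl⟩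
    have hIb : degree I (brule ψ) = 1 := by rw [degree_brule, if_pos (hI ψ hψ)]
    have hrank : (brule ψ).rank = 1 := rfl
    have hge := degree_ge_one K (brule ψ)
    rcases eq_or_lt_of_le r'.rank_pos with h1 | h1
    · have hle' := hle (brule ψ) hmem (by rw [hrank]; exact h1)
      omega
    · have heq' := heq (brule ψ) hmem (by rw [hrank]; exact h1)
      omega
  refine ⟨⟨r', hr'G, hlt, fun r hr => hle r (Or.inl hr), fun r hr => heq r (Or.inl hr)⟩, ?_⟩
  intro ψ hψ
  have h1 := hdegK ψ hψ
  rw [degree_brule] at h1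
  by_contra hs
  rw [if_neg hs] at h1
  omega

/-- The interpretation corresponding to a boolean valuation. -/
def fset (f : U → Bool) : Set U := {a | f a = true}

lemma isClopen_sat (ξ : Formula U) : IsClopen {f : U → Bool | Sat (fset f) ξ} := by
  induction ξ with
  | atom a =>
      have h : {f : U → Bool | Sat (fset f) (Formula.atom a)} =
          (fun f : U → Bool => f a) ⁻¹' {true} := by
        ext f; simp [Sat, fset]
      rw [h]
      exact (isClopen_discrete _).preimage (continuous_apply a)
  | bot =>
      have h : {f : U → Bool | Sat (fset f) Formula.bot} = ∅ := by
        ext f; simp [Sat]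
      rw [h]; exact isClopen_empty
  | conj φ ψ ih1 ih2 =>
      have h : {f : U → Bool | Sat (fset f) (Formula.conj φ ψ)} =
          {f : U → Bool | Sat (fset f) φ} ∩ {f : U → Bool | Sat (fset f) ψ} := rfl
      rw [h]; exact ih1.inter ih2
  | disj φ ψ ih1 ih2 =>
      have h : {f : U → Bool | Sat (fset f) (Formula.disj φ ψ)} =
          {f : U → Bool | Sat (fset f) φ} ∪ {f : U → Bool | Sat (fset f) ψ} := rfl
      rw [h]; exact ih1.union ih2
  | imp φ ψ ih1 ih2 =>
      have h : {f : U → Bool | Sat (fset f) (Formula.imp φ ψ)} =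
          {f : U → Bool | Sat (fset f) φ}ᶜ ∪ {f : U → Bool | Sat (fset f) ψ} := by
        ext f
        simp only [Set.mem_union, Set.mem_compl_iff, Set.mem_setOf_eq]
        show (Sat (fset f) φ → Sat (fset f) ψ) ↔ _
        tauto
      rw [h]; exact ih1.compl.union ih2

/-- Propositional compactness tailored to "beaters": if every finite subtheory of `Θ` admits a
model that dominates `I` w.r.t. the finite selector `G`, then so does `Θ` itself. -/
lemma compactness_beaters (Θ : Set (Formula U)) (G : Set (Rule U)) (hG : G.Finite) (I : Set U)
    (h : ∀ F : Set (Formula U), F ⊆ Θ → F.Finite → ∃ K : Set U, SatTheory K F ∧ gtSel G K I) :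
    ∃ K : Set U, SatTheory K Θ ∧ gtSel G K I := by
  classical
  by_contra hcon
  set L : Set (Formula U) := ⋃ r ∈ G, insert r.body {φ | φ ∈ r.head} with hLdef
  have hLfin : L.Finite :=
    hG.biUnion fun r _ => (List.finite_toSet r.head).insert r.body
  haveI : Finite ↥L := hLfin.to_subtype
  set ρ : (U → Bool) → (↥L → Bool) := fun f ξ => decide (Sat (fset f) ξ.1) with hρdef
  set W : Set (U → Bool) := {f | gtSel G (fset f) I} with hWdef
  set D : Set (U → Bool) := ρ ⁻¹' (ρ '' W) with hDdef
  have hDclosed : IsClosed D := by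
    have hD2 : D = ⋃ w ∈ ρ '' W, ⋂ ξ : ↥L, {f : U → Bool | decide (Sat (fset f) ξ.1) = w ξ} := by
      ext f
      simp only [hDdef, Set.mem_preimage, Set.mem_iUnion, Set.mem_iInter,
        Set.mem_setOf_eq, exists_prop]
      constructor
      · intro hf; exact ⟨ρ f, hf, fun ξ => rfl⟩
      · rintro ⟨w, hw, hfw⟩
        have hfw' : ρ f = w := funext hfw
        rw [hfw']; exact hw
    rw [hD2]
    refine (Set.toFinite (ρ '' W)).isClosed_biUnion fun w _ => isClosed_iInter fun ξ => ?_
    cases hwx : w ξ with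
    | true =>
        have h : {f : U → Bool | decide (Sat (fset f) ξ.1) = true} =
            {f : U → Bool | Sat (fset f) ξ.1} := by
          ext f; simp
        rw [h]; exact (isClopen_sat ξ.1).isClosed
    | false =>
        have h : {f : U → Bool | decide (Sat (fset f) ξ.1) = false} =
            {f : U → Bool | Sat (fset f) ξ.1}ᶜ := by
          ext f; simp
        rw [h]; exact (isClopen_sat ξ.1).compl.isClosed
  have hempty : D ∩ ⋂ θ : ↥Θ, {f : U → Bool | Sat (fset f) θ.1} = ∅ := by
    rw [Set.eq_empty_iff_forall_notMem]
    rintro f ⟨hfD, hfC⟩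
    obtain ⟨f₀, hf₀W, hρeq⟩ := hfD
    apply hcon
    refine ⟨fset f, ?_, ?_⟩
    · intro θ hθ
      exact Set.mem_iInter.mp hfC ⟨θ, hθ⟩
    · have hdeg : ∀ r ∈ G, degree (fset f) r = degree (fset f₀) r := by
        intro r hr
        apply degree_congr
        · have hbL : r.body ∈ L := Set.mem_biUnion hr (Set.mem_insert _ _)
          have h0 := congrFun hρeq ⟨r.body, hbL⟩
          exact (decide_eq_decide.mp h0).symm
        · intro φ hφ
          have hφL : φ ∈ L := Set.mem_biUnion hr (Set.mem_insert_of_mem _ hφ)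
          have h0 := congrFun hρeq ⟨φ, hφL⟩
          exact (decide_eq_decide.mp h0).symm
      obtain ⟨r', hr', hlt, hle, heq⟩ := hf₀W
      refine ⟨r', hr', ?_, ?_, ?_⟩
      · rw [hdeg r' hr']; exact hlt
      · intro r hr hrk; rw [hdeg r hr]; exact hle r hr hrk
      · intro r hr hrk; rw [hdeg r hr]; exact heq r hr hrk
  obtain ⟨t, ht⟩ := hDclosed.isCompact.elim_finite_subfamily_closed
    (fun θ : ↥Θ => {f : U → Bool | Sat (fset f) θ.1})
    (fun θ => (isClopen_sat θ.1).isClosed) hempty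
  obtain ⟨K, hKF, hKgt⟩ := h (Subtype.val '' (↑t : Set ↥Θ))
    (by rintro _ ⟨θ, -, rfl⟩; exact θ.2) (t.finite_toSet.image _)
  set fK : U → Bool := fun a => decide (a ∈ K) with hfKdef
  have hfK : fset fK = K := by
    ext a; simp [fset, hfKdef]
  have hfKW : fK ∈ W := by
    show gtSel G (fset fK) I
    rw [hfK]; exact hKgt
  have hfKmem : fK ∈ D ∩ ⋂ θ ∈ t, {f : U → Bool | Sat (fset f) θ.1} := by
    refine ⟨Set.subset_preimage_image ρ W hfKW, Set.mem_iInter₂.mpr fun θ hθ => ?_⟩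
    show Sat (fset fK) θ.1
    rw [hfK]
    exact hKF θ.1 ⟨θ, hθ, rfl⟩
  rw [ht] at hfKmem
  exact hfKmem

/-- Theorem 12: for CO problems, `P ≡^s_g Q` iff `P ≡^s Q`. -/
theorem stmt13 {U : Type} [Countable U] (P Q : OptProblem U) :
    sgeqv Sem.co 1 ⊤ P Q ↔ seqv Sem.co 1 ⊤ P Q := by
  constructor
  · intro h R _ hint
    exact h R hint
  · intro h
    have main : ∀ P' Q' : OptProblem U, seqv Sem.co 1 ⊤ P' Q' →
        ∀ R : OptProblem U, pref Sem.co (P'.union R) ⊆ pref Sem.co (Q'.union R) := by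
      clear h P Q
      intro P Q hPQ R I hI
      obtain ⟨hIout, hnob⟩ := hI
      have hIsat : SatTheory I (P.gen ∪ R.gen) := hIout
      have hIsatP : SatTheory I P.gen := fun θ hθ => hIsat θ (Or.inl hθ)
      have hIsatR : SatTheory I R.gen := fun θ hθ => hIsat θ (Or.inr hθ)
      by_contra hnot
      have claim2 : ∃ F : Set (Formula U), F ⊆ R.gen ∧ F.Finite ∧
          ∀ K : Set U, SatTheory K P.gen → ¬ gtSel (P.sel ∪ (R.sel ∪ brule '' F)) K I := by
        by_contra hc2
        push_neg at hc2
        apply hnob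
        have hyp : ∀ E : Set (Formula U), E ⊆ P.gen ∪ R.gen → E.Finite →
            ∃ K : Set U, SatTheory K E ∧ gtSel (P.sel ∪ R.sel) K I := by
          intro E hE hEfin
          obtain ⟨K, hKP, hKgt⟩ := hc2 (E ∩ R.gen) Set.inter_subset_right
            (hEfin.inter_of_left _)
          rw [← Set.union_assoc] at hKgt
          have h2 := gtSel_brules (fun ψ hψ => hIsatR ψ hψ.2) hKgt
          refine ⟨K, ?_, h2.1⟩
          intro θ hθ
          rcases hE hθ with hP | hR
          · exact hKP θ hP
          · exact h2.2 θ ⟨hθ, hR⟩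
        obtain ⟨K, hK1, hK2⟩ := compactness_beaters (P.gen ∪ R.gen) (P.sel ∪ R.sel)
          (P.sel_finite.union R.sel_finite) I hyp
        exact ⟨K, hK1, hK2⟩
      obtain ⟨F, hFsub, hFfin, hFgood⟩ := claim2
      set R' : OptProblem U := ⟨∅, R.sel ∪ brule '' F, R.sel_finite.union (hFfin.image _)⟩
        with hR'def
      have hIP' : I ∈ pref Sem.co (P.union R') := by
        refine ⟨?_, ?_⟩
        · intro θ hθ
          rcases hθ with hθ | hθ
          · exact hIsatP θ hθ
          · exact absurd hθ (Set.notMem_empty θ)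
        · rintro ⟨K, hKout, hKgt⟩
          have hKsat : SatTheory K (P.gen ∪ ∅) := hKout
          exact hFgood K (fun θ hθ => hKsat θ (Or.inl hθ)) hKgt
      have hIQ' : I ∈ pref Sem.co (Q.union R') := by
        rw [← hPQ R' rfl (fun r _ => ⟨r.rank_pos, le_top⟩)]
        exact hIP'
      apply hnot
      obtain ⟨hIQout, hIQnob⟩ := hIQ'
      have hIQgen : SatTheory I Q.gen := fun θ hθ => hIQout θ (Or.inl hθ)
      refine ⟨?_, ?_⟩
      · intro θ hθ
        rcases hθ with h1 | h2
        · exact hIQgen θ h1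
        · exact hIsatR θ h2
      · rintro ⟨K, hKout, hKgt⟩
        apply hIQnob
        have hKsat : SatTheory K (Q.gen ∪ R.gen) := hKout
        have hKR : SatTheory K R.gen := fun θ hθ => hKsat θ (Or.inr hθ)
        refine ⟨K, ?_, ?_⟩
        · intro θ hθ
          rcases hθ with h1 | h2
          · exact hKsat θ (Or.inl h1)
          · exact absurd h2 (Set.notMem_empty θ)
        · show gtSel (Q.sel ∪ (R.sel ∪ brule '' F)) K I
          rw [← Set.union_assoc]
          apply gtSel_mono_eq ?_ hKgt
          rintro b ⟨ψ, hψ, rfl⟩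
          rw [degree_brule, degree_brule, if_pos (hKR ψ (hFsub hψ)),
            if_pos (hIsatR ψ (hFsub hψ))]
    intro R hint
    exact Set.Subset.antisymm (main P Q h R)
      (main Q P (fun R' h1 h2 => (h R' h1 h2).symm) R)
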